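/- Let K = ⋃_{i=1}^N K_i be a unital symmetric decomposition into admissible bisections of a groupoid 𝒢, Y ⊆ 𝒢⁽⁰⁾ measurable, and let μ̃_{Y,K} be the measure on Y defined by dμ̃_{Y,K} = σ_{Y,K}·d(μ|_Y), where σ_{Y,K}(x) = Σ_{i ∈ K_{Y,x}} 𝔕(K_i,x)^{1/2}, K_{Y,x} = {i : x ∈ s(K_i) and τ_{K_i}(x) ∈ Y}, and 𝔕(K_i,x) is the Radon–Nikodym derivative d(τ_{K_i}⁻¹)_*(μ|_{r(K_i)})/d(μ|_{s(K_i)}) at x. Then for every measurable A ⊆ Y, μ(A) ≤ μ̃_{Y,K}(A) ≤ N·√(μ(A)·μ(Y)); in particular μ̃_{Y,K} is equivalent to μ|_Y. -/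

import Mathlib

open MeasureTheory Set

/-- An algebraic groupoid: a set `G` with a distinguished unit space,
source and range maps, a (total, but only meaningful on composable pairs)
multiplication and an inverse. -/
structure AlgGroupoid (G : Type*) where
  unitSpace : Set G
  s : G → G
  r : G → G
  mul : G → G → G
  inv : G → G
  s_mem : ∀ γ, s γ ∈ unitSpace
  r_mem : ∀ γ, r γ ∈ unitSpace
  s_unit : ∀ x ∈ unitSpace, s x = x
  r_unit : ∀ x ∈ unitSpace, r x = x
  s_mul : ∀ γ₁ γ₂, s γ₁ = r γ₂ → s (mul γ₁ γ₂) = s γ₂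
  r_mul : ∀ γ₁ γ₂, s γ₁ = r γ₂ → r (mul γ₁ γ₂) = r γ₁
  mul_assoc' : ∀ γ₁ γ₂ γ₃, s γ₁ = r γ₂ → s γ₂ = r γ₃ →
    mul (mul γ₁ γ₂) γ₃ = mul γ₁ (mul γ₂ γ₃)
  unit_mul : ∀ γ, mul (r γ) γ = γ
  mul_unit : ∀ γ, mul γ (s γ) = γ
  s_inv : ∀ γ, s (inv γ) = r γ
  r_inv : ∀ γ, r (inv γ) = s γ
  mul_inv : ∀ γ, mul γ (inv γ) = r γ
  inv_mul : ∀ γ, mul (inv γ) γ = s γ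

namespace AlgGroupoid

variable {G : Type*} (𝒢 : AlgGroupoid G)

/-- `A⁻¹ = {γ⁻¹ : γ ∈ A}`. -/
def invSet (A : Set G) : Set G := 𝒢.inv '' A

/-- `A · B = {γ₁γ₂ : γ₁ ∈ A, γ₂ ∈ B, s(γ₁) = r(γ₂)}`. -/
def mulSet (A B : Set G) : Set G :=
  {γ | ∃ γ₁ ∈ A, ∃ γ₂ ∈ B, 𝒢.s γ₁ = 𝒢.r γ₂ ∧ γ = 𝒢.mul γ₁ γ₂}

/-- `r (K ⋅ A)` for `A` a subset of the unit space. -/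
def rMul (K A : Set G) : Set G := 𝒢.r '' {γ | γ ∈ K ∧ 𝒢.s γ ∈ A}

/-- A length function on a groupoid. -/
structure IsLength (ℓ : G → ℝ) : Prop where
  nonneg : ∀ γ, 0 ≤ ℓ γ
  unit_zero : ∀ x ∈ 𝒢.unitSpace, ℓ x = 0
  inv_eq : ∀ γ, ℓ (𝒢.inv γ) = ℓ γ
  subadd : ∀ γ₁ γ₂, 𝒢.s γ₁ = 𝒢.r γ₂ → ℓ (𝒢.mul γ₁ γ₂) ≤ ℓ γ₁ + ℓ γ₂

/-- A bisection: both source and range maps are injective on it. -/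
def IsBisection (K : Set G) : Prop := Set.InjOn 𝒢.s K ∧ Set.InjOn 𝒢.r K

/-- `ℓ(K) ≤ L`. -/
def lengthLE (ℓ : G → ℝ) (K : Set G) (L : ℝ) : Prop := ∀ γ ∈ K, ℓ γ ≤ L

variable [MeasurableSpace G]

/-- An admissible bisection: the source and range sets are measurable, the induced
bijection `τ_K = r|_K ∘ (s|_K)⁻¹` is a measure-class-preserving measurable
isomorphism (formulated at the level of sets), and `ℓ(K) < ∞`. -/
structure IsAdmissible (ℓ : G → ℝ) (μ : Measure G) (K : Set G) : Prop where
  bisection : 𝒢.IsBisection K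
  source_meas : MeasurableSet (𝒢.s '' K)
  range_meas : MeasurableSet (𝒢.r '' K)
  image_meas : ∀ A : Set G, MeasurableSet A → A ⊆ 𝒢.s '' K → MeasurableSet (𝒢.rMul K A)
  preimage_meas : ∀ B : Set G, MeasurableSet B → B ⊆ 𝒢.r '' K →
    MeasurableSet (𝒢.rMul (𝒢.invSet K) B)
  null_iff : ∀ A : Set G, MeasurableSet A → A ⊆ 𝒢.s '' K →
    (μ (𝒢.rMul K A) = 0 ↔ μ A = 0)
  length_bdd : ∃ L : ℝ, ∀ γ ∈ K, ℓ γ ≤ L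

/-- `K` is decomposable: a finite union of admissible bisections. -/
def IsDecomposable (ℓ : G → ℝ) (μ : Measure G) (K : Set G) : Prop :=
  ∃ (N : ℕ) (Ks : Fin N → Set G),
    (∀ i, 𝒢.IsAdmissible ℓ μ (Ks i)) ∧ K = ⋃ i, Ks i

/-- `K` is unital symmetric `N`-decomposable. -/
def IsUSDecomposable (ℓ : G → ℝ) (μ : Measure G) (N : ℕ) (K : Set G) : Prop :=
  ∃ Ks : Fin N → Set G,
    (∀ i, 𝒢.IsAdmissible ℓ μ (Ks i)) ∧ K = ⋃ i, Ks i ∧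
    (∃ i, Ks i = 𝒢.unitSpace) ∧
    (∃ σ : Equiv.Perm (Fin N), ∀ i, 𝒢.invSet (Ks i) = Ks (σ i))

/-- `𝒢` is asymptotically expanding in measure `μ`. -/
def AsympExpanding (ℓ : G → ℝ) (μ : Measure G) : Prop :=
  ∀ α : ℝ, 0 < α → α ≤ 1 / 2 →
    ∃ (C L : ℝ) (N : ℕ) (K : Set G), 0 < C ∧
      𝒢.IsUSDecomposable ℓ μ N K ∧ lengthLE ℓ K L ∧
      ∀ A : Set G, MeasurableSet A → A ⊆ 𝒢.unitSpace →
        α ≤ (μ A).toReal → (μ A).toReal ≤ 1 / 2 →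
        C * (μ A).toReal < (μ (𝒢.rMul K A \ A)).toReal

/-- `Y` is a domain of asymptotic expansion. -/
def DomainAsympExp (ℓ : G → ℝ) (μ : Measure G) (Y : Set G) : Prop :=
  ∀ α : ℝ, 0 < α → α ≤ 1 / 2 →
    ∃ (C L : ℝ) (N : ℕ) (K : Set G), 0 < C ∧
      𝒢.IsUSDecomposable ℓ μ N K ∧ lengthLE ℓ K L ∧
      ∀ A : Set G, MeasurableSet A → A ⊆ Y →
        α * (μ Y).toReal ≤ (μ A).toReal → (μ A).toReal ≤ (μ Y).toReal / 2 →
        C * (μ A).toReal < (μ ((𝒢.rMul K A \ A) ∩ Y)).toReal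

end AlgGroupoid

open MeasureTheory in
/-- The density `σ_{Y,K}(x) = Σ_{i ∈ K_{Y,x}} 𝔕(K_i,x)^{1/2}`, where `sK i = s(K_i)`,
`τ i` realises `τ_{K_i}` and `ρ i` is the Radon–Nikodym derivative `𝔕(K_i,·)`. -/
noncomputable def sigmaYK {G : Type*} (N : ℕ) (sK : Fin N → Set G)
    (τ : Fin N → G → G) (ρ : Fin N → G → ℝ) (Y : Set G) (x : G) : ℝ :=
  ∑ i, Set.indicator {z | z ∈ sK i ∧ τ i z ∈ Y} (fun z => Real.sqrt (ρ i z)) x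

open MeasureTheory in
/-- for a unital symmetric decomposition `K = ⋃ᵢ Kᵢ` and the measure
`dμ̃_{Y,K} = σ_{Y,K} d(μ|_Y)`, every measurable `A ⊆ Y` satisfies
`μ(A) ≤ μ̃_{Y,K}(A) ≤ N √(μ(A) μ(Y))`; in particular `μ̃_{Y,K}` and `μ|_Y` have the
same null sets. -/
theorem stmt10 {G : Type*} [MeasurableSpace G] (𝒢 : AlgGroupoid G) (ℓ : G → ℝ)
    (μ : Measure G) [IsProbabilityMeasure μ]
    (N : ℕ) (Ks : Fin N → Set G)
    (hadm : ∀ i, 𝒢.IsAdmissible ℓ μ (Ks i))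
    (hunital : ∃ i, Ks i = 𝒢.unitSpace)
    (hsymm : ∃ σ : Equiv.Perm (Fin N), ∀ i, 𝒢.invSet (Ks i) = Ks (σ i))
    (Y : Set G) (hY : MeasurableSet Y) (hYsub : Y ⊆ 𝒢.unitSpace)
    (τ : Fin N → G → G)
    (hτ : ∀ i, ∀ γ ∈ Ks i, τ i (𝒢.s γ) = 𝒢.r γ)
    (hτmeas : ∀ i, Measurable (τ i))
    (ρ : Fin N → G → ℝ) (hρ0 : ∀ i x, 0 ≤ ρ i x) (hρmeas : ∀ i, Measurable (ρ i))
    (hρ : ∀ i, ∀ A : Set G, MeasurableSet A → A ⊆ 𝒢.s '' Ks i →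
      μ (τ i '' A) = ∫⁻ x in A, ENNReal.ofReal (ρ i x) ∂μ)
    (A : Set G) (hA : MeasurableSet A) (hAY : A ⊆ Y) :
    μ A ≤ ∫⁻ x in A,
        ENNReal.ofReal (sigmaYK N (fun i => 𝒢.s '' Ks i) τ ρ Y x) ∂μ ∧
    (∫⁻ x in A,
        ENNReal.ofReal (sigmaYK N (fun i => 𝒢.s '' Ks i) τ ρ Y x) ∂μ).toReal
      ≤ N * Real.sqrt ((μ A).toReal * (μ Y).toReal) ∧
    ((∫⁻ x in A,
        ENNReal.ofReal (sigmaYK N (fun i => 𝒢.s '' Ks i) τ ρ Y x) ∂μ) = 0 ↔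
      μ A = 0) := by
  
  classical
  obtain ⟨i₀, hi₀⟩ := hunital
  -- source of the unit bisection is the unit space
  have hU : 𝒢.s '' Ks i₀ = 𝒢.unitSpace := by
    rw [hi₀]; ext x
    constructor
    · rintro ⟨γ, hγ, rfl⟩; rw [𝒢.s_unit γ hγ]; exact hγ
    · intro hx; exact ⟨x, hx, 𝒢.s_unit x hx⟩
  have hτ₀ : ∀ x ∈ 𝒢.unitSpace, τ i₀ x = x := by
    intro x hx
    have := hτ i₀ x (hi₀ ▸ hx)
    rwa [𝒢.s_unit x hx, 𝒢.r_unit x hx] at this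
  -- the sets E i
  set E : Fin N → Set G := fun i => {z | z ∈ 𝒢.s '' Ks i ∧ τ i z ∈ Y} with hE
  have hEmeas : ∀ i, MeasurableSet (E i) := fun i =>
    ((hadm i).source_meas).inter ((hτmeas i) hY)
  have hEY : ∀ i, τ i '' (E i ∩ A) ⊆ Y := by
    rintro i y ⟨x, ⟨hxE, _⟩, rfl⟩; exact hxE.2
  have hEsub : ∀ i, E i ∩ A ⊆ 𝒢.s '' Ks i := fun i x hx => hx.1.1
  -- measurability of the summands
  have hfmeas : ∀ i, Measurable fun x =>
      (E i).indicator (fun z => ENNReal.ofReal (Real.sqrt (ρ i z))) x := fun i =>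
    (Measurable.ennreal_ofReal (Real.continuous_sqrt.measurable.comp (hρmeas i))).indicator
      (hEmeas i)
  -- the integral splits as a sum
  have hsplit : ∫⁻ x in A,
      ENNReal.ofReal (sigmaYK N (fun i => 𝒢.s '' Ks i) τ ρ Y x) ∂μ
      = ∑ i, ∫⁻ x in E i ∩ A, ENNReal.ofReal (Real.sqrt (ρ i x)) ∂μ := by
    have h1 : ∀ x, ENNReal.ofReal (sigmaYK N (fun i => 𝒢.s '' Ks i) τ ρ Y x)
        = ∑ i, (E i).indicator (fun z => ENNReal.ofReal (Real.sqrt (ρ i z))) x := by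
      intro x
      rw [sigmaYK, ENNReal.ofReal_sum_of_nonneg]
      · refine Finset.sum_congr rfl fun i _ => ?_
        by_cases hx : x ∈ E i
        · rw [Set.indicator_of_mem hx, Set.indicator_of_mem hx]
        · rw [Set.indicator_of_notMem hx, Set.indicator_of_notMem hx, ENNReal.ofReal_zero]
      · intro i _
        exact Set.indicator_nonneg (fun z _ => Real.sqrt_nonneg _) x
    simp_rw [h1]
    rw [lintegral_finset_sum _ (fun i _ => hfmeas i)]
    refine Finset.sum_congr rfl fun i _ => ?_
    rw [lintegral_indicator (hEmeas i) _, Measure.restrict_restrict (hEmeas i)]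
  -- the key identity for the unit bisection
  have hkey : ∫⁻ x in A, ENNReal.ofReal (Real.sqrt (ρ i₀ x)) ∂μ = μ A := by
    have hone : (fun x => ENNReal.ofReal (ρ i₀ x)) =ᵐ[μ.restrict A] (fun _ => 1) := by
      refine ae_eq_of_forall_setLIntegral_eq_of_sigmaFinite
        ((hρmeas i₀).ennreal_ofReal) measurable_const fun s hs _ => ?_
      have hsub : s ∩ A ⊆ 𝒢.s '' Ks i₀ := by
        rw [hU]; exact fun x hx => hYsub (hAY hx.2)
      have himg : τ i₀ '' (s ∩ A) = s ∩ A := by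
        ext y; constructor
        · rintro ⟨x, hx, rfl⟩
          rw [hτ₀ x (hYsub (hAY hx.2))]; exact hx
        · intro hy; exact ⟨y, hy, hτ₀ y (hYsub (hAY hy.2))⟩
      rw [Measure.restrict_restrict hs, ← hρ i₀ (s ∩ A) (hs.inter hA) hsub, himg,
        lintegral_one, Measure.restrict_apply MeasurableSet.univ, Set.univ_inter]
    have hone' : (fun x => ENNReal.ofReal (Real.sqrt (ρ i₀ x)))
        =ᵐ[μ.restrict A] (fun _ => 1) := by
      filter_upwards [hone] with x hx
      have : ρ i₀ x = 1 := ENNReal.ofReal_eq_one.mp hx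
      simp [this]
    rw [lintegral_congr_ae hone', lintegral_one, Measure.restrict_apply MeasurableSet.univ,
      Set.univ_inter]
  -- measurability of σ
  have hσmeas : Measurable fun x =>
      ENNReal.ofReal (sigmaYK N (fun i => 𝒢.s '' Ks i) τ ρ Y x) := by
    apply Measurable.ennreal_ofReal
    unfold sigmaYK
    exact Finset.measurable_sum _ fun i _ =>
      (Real.continuous_sqrt.measurable.comp (hρmeas i)).indicator (hEmeas i)
  -- Part 1: lower bound
  have part1 : μ A ≤ ∫⁻ x in A,
      ENNReal.ofReal (sigmaYK N (fun i => 𝒢.s '' Ks i) τ ρ Y x) ∂μ := by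
    rw [← hkey]
    refine setLIntegral_mono hσmeas fun x hx => ?_
    apply ENNReal.ofReal_le_ofReal
    have hmem : x ∈ {z | z ∈ 𝒢.s '' Ks i₀ ∧ τ i₀ z ∈ Y} := ⟨hU ▸ hYsub (hAY hx), by rw [hτ₀ x (hYsub (hAY hx))]; exact hAY hx⟩
    calc Real.sqrt (ρ i₀ x)
        = Set.indicator {z | z ∈ 𝒢.s '' Ks i₀ ∧ τ i₀ z ∈ Y}
            (fun z => Real.sqrt (ρ i₀ z)) x := by rw [Set.indicator_of_mem hmem]
      _ ≤ sigmaYK N (fun i => 𝒢.s '' Ks i) τ ρ Y x :=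
          Finset.single_le_sum (f := fun i => Set.indicator
              {z | z ∈ 𝒢.s '' Ks i ∧ τ i z ∈ Y} (fun z => Real.sqrt (ρ i z)) x)
            (fun i _ => Set.indicator_nonneg (fun z _ => Real.sqrt_nonneg _) x)
            (Finset.mem_univ i₀)
  -- Cauchy-Schwarz bound for each summand
  have hCS : ∀ i, ∫⁻ x in E i ∩ A, ENNReal.ofReal (Real.sqrt (ρ i x)) ∂μ
      ≤ (μ Y) ^ (1/2 : ℝ) * (μ A) ^ (1/2 : ℝ) := by
    intro i
    have hpq : Real.HolderConjugate 2 2 := Real.HolderConjugate.two_two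
    have hfi : AEMeasurable (fun x => ENNReal.ofReal (ρ i x) ^ (1/2 : ℝ))
        (μ.restrict (E i ∩ A)) :=
      ((hρmeas i).ennreal_ofReal.pow_const _).aemeasurable
    have h1 : ∀ x, ENNReal.ofReal (Real.sqrt (ρ i x))
        = (((fun x => ENNReal.ofReal (ρ i x) ^ (1/2 : ℝ)) * (fun _ => 1) : G → ENNReal)) x := by
      intro x
      simp only [Pi.mul_apply, mul_one]
      rw [Real.sqrt_eq_rpow, ENNReal.ofReal_rpow_of_nonneg (hρ0 i x) (by norm_num)]
    calc ∫⁻ x in E i ∩ A, ENNReal.ofReal (Real.sqrt (ρ i x)) ∂μ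
        = ∫⁻ x in E i ∩ A,
            (((fun x => ENNReal.ofReal (ρ i x) ^ (1/2 : ℝ)) * (fun _ => 1) : G → ENNReal)) x ∂μ := by
          exact lintegral_congr fun x => h1 x
      _ ≤ (∫⁻ x in E i ∩ A, (ENNReal.ofReal (ρ i x) ^ (1/2 : ℝ)) ^ (2 : ℝ) ∂μ) ^ (1/2 : ℝ)
            * (∫⁻ x in E i ∩ A, (1 : ENNReal) ^ (2 : ℝ) ∂μ) ^ (1/2 : ℝ) :=
          ENNReal.lintegral_mul_le_Lp_mul_Lq _ hpq hfi aemeasurable_const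
      _ = (∫⁻ x in E i ∩ A, ENNReal.ofReal (ρ i x) ∂μ) ^ (1/2 : ℝ)
            * (μ (E i ∩ A)) ^ (1/2 : ℝ) := by
          congr 1
          · congr 1
            refine lintegral_congr fun x => ?_
            rw [← ENNReal.rpow_mul]
            norm_num
          · congr 1
            simp only [ENNReal.one_rpow]
            rw [lintegral_one, Measure.restrict_apply MeasurableSet.univ, Set.univ_inter]
      _ ≤ (μ Y) ^ (1/2 : ℝ) * (μ A) ^ (1/2 : ℝ) := by
          gcongr
          · rw [← hρ i (E i ∩ A) ((hEmeas i).inter hA) (hEsub i)]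
            exact measure_mono (hEY i)
          · exact Set.inter_subset_right
  -- Part 2: upper bound
  have part2 : (∫⁻ x in A,
      ENNReal.ofReal (sigmaYK N (fun i => 𝒢.s '' Ks i) τ ρ Y x) ∂μ).toReal
      ≤ N * Real.sqrt ((μ A).toReal * (μ Y).toReal) := by
    have hbound : ∫⁻ x in A,
        ENNReal.ofReal (sigmaYK N (fun i => 𝒢.s '' Ks i) τ ρ Y x) ∂μ
        ≤ (N : ENNReal) * ((μ Y) ^ (1/2 : ℝ) * (μ A) ^ (1/2 : ℝ)) := by
      rw [hsplit]
      calc ∑ i, ∫⁻ x in E i ∩ A, ENNReal.ofReal (Real.sqrt (ρ i x)) ∂μ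
          ≤ ∑ _i : Fin N, (μ Y) ^ (1/2 : ℝ) * (μ A) ^ (1/2 : ℝ) :=
            Finset.sum_le_sum fun i _ => hCS i
        _ = (N : ENNReal) * ((μ Y) ^ (1/2 : ℝ) * (μ A) ^ (1/2 : ℝ)) := by
            rw [Finset.sum_const, Finset.card_univ, Fintype.card_fin, nsmul_eq_mul]
    have hfin : (N : ENNReal) * ((μ Y) ^ (1/2 : ℝ) * (μ A) ^ (1/2 : ℝ)) ≠ ⊤ := by
      refine ENNReal.mul_ne_top (ENNReal.natCast_ne_top N) (ENNReal.mul_ne_top ?_ ?_)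
      · exact ENNReal.rpow_ne_top_of_nonneg (by norm_num) (measure_ne_top μ Y)
      · exact ENNReal.rpow_ne_top_of_nonneg (by norm_num) (measure_ne_top μ A)
    calc (∫⁻ x in A,
        ENNReal.ofReal (sigmaYK N (fun i => 𝒢.s '' Ks i) τ ρ Y x) ∂μ).toReal
        ≤ ((N : ENNReal) * ((μ Y) ^ (1/2 : ℝ) * (μ A) ^ (1/2 : ℝ))).toReal :=
          ENNReal.toReal_mono hfin hbound
      _ = N * Real.sqrt ((μ A).toReal * (μ Y).toReal) := by
          rw [ENNReal.toReal_mul, ENNReal.toReal_mul, ENNReal.toReal_natCast,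
            ← ENNReal.toReal_rpow, ← ENNReal.toReal_rpow,
            Real.sqrt_mul ENNReal.toReal_nonneg, Real.sqrt_eq_rpow, Real.sqrt_eq_rpow]
          ring
  refine ⟨part1, part2, ?_, ?_⟩
  · intro h0
    exact le_antisymm (h0 ▸ part1) zero_le
  · intro h0
    exact setLIntegral_measure_zero _ _ h0
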